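/- The monoid U_n(ℕ_max) of unitriangular n×n tropical matrices with above-diagonal entries in ℕ ∪ {-∞} is strongly permutable if and only if n ≤ 2. -/

import Mathlib

set_option maxHeartbeats 1000000

universe u

/-! ### Semiring classes.

A *semiring* here is a nonempty set with an associative commutative addition and an
associative multiplication which distributes over addition on both sides; no zero or
identity element is assumed. -/

class PlainSemiring (S : Type u) extends Add S, Mul S where
  nonempty' : Nonempty S
  add_assoc' : ∀ a b c : S, a + b + c = a + (b + c)
  add_comm' : ∀ a b : S, a + b = b + a
  mul_assoc' : ∀ a b c : S, a * b * c = a * (b * c)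
  left_distrib' : ∀ a b c : S, a * (b + c) = a * b + a * c
  right_distrib' : ∀ a b c : S, (a + b) * c = a * c + b * c

/-- A bipotent semiring: `x + y` is always either `x` or `y`.
(The induced total order is given by `x ≤ y ↔ x + y = y`.) -/
class BipotentSemiring (S : Type u) extends PlainSemiring S where
  bipotent : ∀ a b : S, a + b = a ∨ a + b = b

/-- A commutative bipotent semiring. -/
class CommBipotentSemiring (S : Type u) extends BipotentSemiring S where
  mul_comm' : ∀ a b : S, a * b = b * a

/-- `mpow a n` is the `(n+1)`-st power of `a`, so the set of positive powers of `a`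
is exactly `Set.range (mpow a)`, and the multiplicative order of `a` is the
cardinality of `Set.range (mpow a)`. -/
def mpow {S : Type*} [Mul S] (a : S) : ℕ → S
  | 0 => a
  | n + 1 => mpow a n * a

lemma mpow_mul_mpow {S : Type*} [PlainSemiring S] (a : S) (m n : ℕ) :
    mpow a m * mpow a n = mpow a (m + n + 1) := by
  induction n with
  | zero => rfl
  | succ n ih =>
    show mpow a m * (mpow a n * a) = mpow a (m + n + 1) * a
    rw [← PlainSemiring.mul_assoc', ih]

/-! ### Products of finite families, and permutability. -/

/-- Fold step used to define sums/products of possibly empty families in a structure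
with no neutral element; the overall fold is `none` iff the family is empty. -/
def optStep {S : Type*} (op : S → S → S) : Option S → S → Option S :=
  fun acc x => some (acc.elim x (fun a => op a x))

/-- The sum `s 0 + s 1 + ⋯` of a finite family, as an `Option` (`none` iff `k = 0`). -/
def finSum {S : Type*} [Add S] {k : ℕ} (s : Fin k → S) : Option S :=
  (List.ofFn s).foldl (optStep (· + ·)) none

/-- The product `s 0 * s 1 * ⋯` of a finite family, as an `Option` (`none` iff `k = 0`). -/
def finProd {S : Type*} [Mul S] {k : ℕ} (s : Fin k → S) : Option S :=
  (List.ofFn s).foldl (optStep (· * ·)) none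

/-- A multiplicative structure is `k`-permutable if every product of `k` elements is
preserved by some non-identity permutation of its factors. -/
def KPermutable (S : Type*) [Mul S] (k : ℕ) : Prop :=
  ∀ s : Fin k → S, ∃ σ : Equiv.Perm (Fin k), σ ≠ Equiv.refl (Fin k) ∧
    finProd (fun i => s (σ i)) = finProd s

/-- A semigroup is strongly permutable if it is `k`-permutable for some `k ≥ 2`. -/
def StronglyPermutable (S : Type*) [Mul S] : Prop :=
  ∃ k : ℕ, 2 ≤ k ∧ KPermutable S k

/-- A semigroup is weakly permutable if for some `k ≥ 2`, any product of `k` elements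
is computed identically by two distinct permutations of its factors. -/
def WeaklyPermutable (S : Type*) [Mul S] : Prop :=
  ∃ k : ℕ, 2 ≤ k ∧ ∀ s : Fin k → S, ∃ σ τ : Equiv.Perm (Fin k), σ ≠ τ ∧
    finProd (fun i => s (σ i)) = finProd (fun i => s (τ i))

/-- Isomorphism of semirings (bijection preserving addition and multiplication). -/
def RingLikeIso (S T : Type*) [Add S] [Mul S] [Add T] [Mul T] : Prop :=
  ∃ f : S → T, Function.Bijective f ∧ (∀ a b : S, f (a + b) = f a + f b) ∧
    (∀ a b : S, f (a * b) = f a * f b)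

/-! ### Matrices. -/

/-- Square `n × n` matrices over `S`. -/
def MatSR (S : Type u) (n : ℕ) : Type u := Fin n → Fin n → S

/-- Matrix multiplication, `(A*B) i j = Σ_k (A i k * B k j)`.  (For `n ≥ 1` — the only
case of interest — the `getD` default value is never used.) -/
def matMul {S : Type*} [Add S] [Mul S] {n : ℕ} (A B : MatSR S n) : MatSR S n :=
  fun i j => (finSum (fun k : Fin n => A i k * B k j)).getD (A i j * B i j)

/-- The multiplicative semigroup `M_n(S)`. -/
instance {S : Type*} [Add S] [Mul S] {n : ℕ} : Mul (MatSR S n) := ⟨matMul⟩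

/-! ### `S⁰`: adjoining a zero, and upper triangular matrices. -/

/-- `S` with a zero (additively neutral, multiplicatively absorbing) element adjoined. -/
inductive Adj0 (S : Type u) : Type u
  | zero : Adj0 S
  | elem : S → Adj0 S

namespace Adj0

def add' {S : Type*} [Add S] : Adj0 S → Adj0 S → Adj0 S
  | .zero, b => b
  | .elem a, .zero => .elem a
  | .elem a, .elem b => .elem (a + b)

def mul' {S : Type*} [Mul S] : Adj0 S → Adj0 S → Adj0 S
  | .zero, _ => .zero
  | .elem _, .zero => .zero
  | .elem a, .elem b => .elem (a * b)

instance {S : Type*} [Add S] : Add (Adj0 S) := ⟨add'⟩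
instance {S : Type*} [Mul S] : Mul (Adj0 S) := ⟨mul'⟩

@[simp] lemma zero_add {S : Type*} [Add S] (b : Adj0 S) : (zero : Adj0 S) + b = b := rfl
@[simp] lemma add_zero {S : Type*} [Add S] (a : Adj0 S) : a + (zero : Adj0 S) = a := by
  cases a <;> rfl
@[simp] lemma elem_add_elem {S : Type*} [Add S] (a b : S) :
    (elem a : Adj0 S) + elem b = elem (a + b) := rfl
@[simp] lemma zero_mul {S : Type*} [Mul S] (b : Adj0 S) : (zero : Adj0 S) * b = zero := rfl
@[simp] lemma mul_zero {S : Type*} [Mul S] (a : Adj0 S) : a * (zero : Adj0 S) = zero := by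
  cases a <;> rfl
@[simp] lemma elem_mul_elem {S : Type*} [Mul S] (a b : S) :
    (elem a : Adj0 S) * elem b = elem (a * b) := rfl

lemma add_eq_zero_iff {S : Type*} [Add S] (a b : Adj0 S) :
    a + b = zero ↔ a = zero ∧ b = zero := by
  cases a <;> cases b <;> simp

end Adj0

lemma foldl_optStep_adj0 {S : Type*} [Add S] (l : List (Adj0 S)) (a : Adj0 S) :
    ∃ c : Adj0 S, l.foldl (optStep (· + ·)) (some a) = some c ∧
      (c = Adj0.zero ↔ a = Adj0.zero ∧ ∀ x ∈ l, x = Adj0.zero) := by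
  induction l generalizing a with
  | nil => exact ⟨a, rfl, by simp⟩
  | cons x l ih =>
    obtain ⟨c, hc, hiff⟩ := ih (a + x)
    refine ⟨c, ?_, ?_⟩
    · simpa [optStep] using hc
    · rw [hiff, Adj0.add_eq_zero_iff]
      simp only [List.mem_cons, forall_eq_or_imp]
      tauto

lemma finSum_adj0_eq_zero {S : Type*} [Add S] {n : ℕ} (f : Fin n → Adj0 S) (i : Fin n)
    (d : Adj0 S) (h : ∀ k, f k = Adj0.zero) : (finSum f).getD d = Adj0.zero := by
  cases n with
  | zero => exact i.elim0
  | succ m =>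
    rw [finSum, List.ofFn_succ, List.foldl_cons]
    obtain ⟨c, hc, hiff⟩ := foldl_optStep_adj0 (List.ofFn fun i : Fin m => f i.succ) (f 0)
    rw [show optStep (· + ·) none (f 0) = some (f 0) from rfl, hc]
    have : c = Adj0.zero := hiff.mpr ⟨h 0, by
      intro x hx
      rw [List.mem_ofFn] at hx
      obtain ⟨j, rfl⟩ := hx
      exact h _⟩
    simp [this]

lemma finSum_adj0_ne_zero {S : Type*} [Add S] {n : ℕ} (f : Fin n → Adj0 S) (i : Fin n)
    (d : Adj0 S) (h : f i ≠ Adj0.zero) : (finSum f).getD d ≠ Adj0.zero := by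
  cases n with
  | zero => exact i.elim0
  | succ m =>
    rw [finSum, List.ofFn_succ, List.foldl_cons]
    obtain ⟨c, hc, hiff⟩ := foldl_optStep_adj0 (List.ofFn fun i : Fin m => f i.succ) (f 0)
    rw [show optStep (· + ·) none (f 0) = some (f 0) from rfl, hc]
    simp only [Option.getD_some]
    intro hcz
    obtain ⟨h0, hall⟩ := hiff.mp hcz
    induction i using Fin.cases with
    | zero => exact h h0
    | succ j => exact h (hall _ (List.mem_ofFn.mpr ⟨j, rfl⟩))

/-- Upper-triangularity over `S⁰`: entries strictly below the diagonal are the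
adjoined zero; entries on and above the diagonal lie in `S`. -/
def IsUT {S : Type*} {n : ℕ} (A : MatSR (Adj0 S) n) : Prop :=
  (∀ i j : Fin n, (j : ℕ) < (i : ℕ) → A i j = Adj0.zero) ∧
  (∀ i j : Fin n, (i : ℕ) ≤ (j : ℕ) → ∃ s : S, A i j = Adj0.elem s)

lemma IsUT.mul {S : Type*} [Add S] [Mul S] {n : ℕ} {A B : MatSR (Adj0 S) n}
    (hA : IsUT A) (hB : IsUT B) : IsUT (matMul A B) := by
  constructor
  · intro i j hji
    apply finSum_adj0_eq_zero _ i
    intro k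
    rcases le_or_gt (i : ℕ) (k : ℕ) with h | h
    · rw [hB.1 k j (lt_of_lt_of_le hji h), Adj0.mul_zero]
    · rw [hA.1 i k h, Adj0.zero_mul]
  · intro i j hij
    have hne : matMul A B i j ≠ Adj0.zero := by
      apply finSum_adj0_ne_zero _ i
      obtain ⟨s, hs⟩ := hA.2 i i le_rfl
      obtain ⟨t, ht⟩ := hB.2 i j hij
      rw [hs, ht, Adj0.elem_mul_elem]
      simp
    cases hc : matMul A B i j with
    | zero => exact absurd hc hne
    | elem s => exact ⟨s, rfl⟩

/-- The multiplicative semigroup `UT_n(S)` of upper triangular matrices over `S⁰`. -/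
def UTMat (S : Type u) (n : ℕ) : Type u := {A : MatSR (Adj0 S) n // IsUT A}

instance {S : Type*} [Add S] [Mul S] {n : ℕ} : Mul (UTMat S n) :=
  ⟨fun A B => ⟨matMul A.1 B.1, A.2.mul B.2⟩⟩

/-! ### `S^{01}`: adjoining a zero and an identity, and unitriangular matrices. -/

/-- `S` with a zero and a multiplicative identity adjoined (`S^{01}` in the paper).
The sum of `one` and an `elem` is left undefined in the paper; it is given an
arbitrary value here, and never arises in products of unitriangular matrices. -/
inductive Adj01 (S : Type u) : Type u
  | zero : Adj01 S
  | one : Adj01 S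
  | elem : S → Adj01 S

namespace Adj01

def add' {S : Type*} [Add S] : Adj01 S → Adj01 S → Adj01 S
  | .zero, b => b
  | a, .zero => a
  | .one, .one => .one
  | .one, .elem b => .elem b
  | .elem a, .one => .elem a
  | .elem a, .elem b => .elem (a + b)

def mul' {S : Type*} [Mul S] : Adj01 S → Adj01 S → Adj01 S
  | .zero, _ => .zero
  | _, .zero => .zero
  | .one, b => b
  | a, .one => a
  | .elem a, .elem b => .elem (a * b)

instance {S : Type*} [Add S] : Add (Adj01 S) := ⟨add'⟩
instance {S : Type*} [Mul S] : Mul (Adj01 S) := ⟨mul'⟩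

@[simp] lemma zero_add {S : Type*} [Add S] (b : Adj01 S) : (zero : Adj01 S) + b = b := by
  cases b <;> rfl
@[simp] lemma add_zero {S : Type*} [Add S] (a : Adj01 S) : a + (zero : Adj01 S) = a := by
  cases a <;> rfl
@[simp] lemma one_add_one {S : Type*} [Add S] : (one : Adj01 S) + one = one := rfl
@[simp] lemma elem_add_elem {S : Type*} [Add S] (a b : S) :
    (elem a : Adj01 S) + elem b = elem (a + b) := rfl
@[simp] lemma one_add_elem {S : Type*} [Add S] (b : S) :
    (one : Adj01 S) + elem b = elem b := rfl
@[simp] lemma elem_add_one {S : Type*} [Add S] (a : S) :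
    (elem a : Adj01 S) + one = elem a := rfl
@[simp] lemma zero_mul {S : Type*} [Mul S] (b : Adj01 S) : (zero : Adj01 S) * b = zero := by
  cases b <;> rfl
@[simp] lemma mul_zero {S : Type*} [Mul S] (a : Adj01 S) : a * (zero : Adj01 S) = zero := by
  cases a <;> rfl
@[simp] lemma one_mul {S : Type*} [Mul S] (b : Adj01 S) : (one : Adj01 S) * b = b := by
  cases b <;> rfl
@[simp] lemma mul_one {S : Type*} [Mul S] (a : Adj01 S) : a * (one : Adj01 S) = a := by
  cases a <;> rfl
@[simp] lemma elem_mul_elem {S : Type*} [Mul S] (a b : S) :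
    (elem a : Adj01 S) * elem b = elem (a * b) := rfl

lemma mul_ne_one {S : Type*} [Mul S] {a b : Adj01 S} (ha : a ≠ one) (hb : b ≠ one) :
    a * b ≠ one := by
  cases a <;> cases b <;> simp_all

lemma add_ne_one {S : Type*} [Add S] {a b : Adj01 S} (ha : a ≠ one) (hb : b ≠ one) :
    a + b ≠ one := by
  cases a <;> cases b <;> simp_all

lemma add_01 {S : Type*} [Add S] {a b : Adj01 S} (ha : a = zero ∨ a = one)
    (hb : b = zero ∨ b = one) :
    (a + b = zero ∨ a + b = one) ∧ (a + b = one ↔ a = one ∨ b = one) := by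
  rcases ha with rfl | rfl <;> rcases hb with rfl | rfl <;> simp

end Adj01

lemma foldl_optStep_adj01 {S : Type*} [Add S] (l : List (Adj01 S)) (a : Adj01 S)
    (ha : a = Adj01.zero ∨ a = Adj01.one) (hl : ∀ x ∈ l, x = Adj01.zero ∨ x = Adj01.one) :
    ∃ c : Adj01 S, l.foldl (optStep (· + ·)) (some a) = some c ∧
      (c = Adj01.zero ∨ c = Adj01.one) ∧
      (c = Adj01.one ↔ a = Adj01.one ∨ ∃ x ∈ l, x = Adj01.one) := by
  induction l generalizing a with
  | nil => exact ⟨a, rfl, ha, by simp⟩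
  | cons x l ih =>
    have hx := hl x (by simp)
    have key := Adj01.add_01 ha hx
    obtain ⟨c, hc, hc01, hiff⟩ := ih (a + x) key.1 (fun y hy => hl y (by simp [hy]))
    refine ⟨c, by simpa [optStep] using hc, hc01, ?_⟩
    rw [hiff, key.2]
    simp only [List.mem_cons, exists_eq_or_imp]
    tauto

lemma foldl_optStep_adj01_ne_one {S : Type*} [Add S] (l : List (Adj01 S)) (a : Adj01 S)
    (ha : a ≠ Adj01.one) (hl : ∀ x ∈ l, x ≠ Adj01.one) :
    ∃ c : Adj01 S, l.foldl (optStep (· + ·)) (some a) = some c ∧ c ≠ Adj01.one := by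
  induction l generalizing a with
  | nil => exact ⟨a, rfl, ha⟩
  | cons x l ih =>
    have hax : a + x ≠ Adj01.one := Adj01.add_ne_one ha (hl x (by simp))
    obtain ⟨c, hc, hcne⟩ := ih (a + x) hax (fun y hy => hl y (by simp [hy]))
    exact ⟨c, by simpa [optStep] using hc, hcne⟩

lemma finSum_adj01_eq_one {S : Type*} [Add S] {n : ℕ} (f : Fin n → Adj01 S) (i : Fin n)
    (d : Adj01 S) (h01 : ∀ k, f k = Adj01.zero ∨ f k = Adj01.one) (hi : f i = Adj01.one) :
    (finSum f).getD d = Adj01.one := by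
  cases n with
  | zero => exact i.elim0
  | succ m =>
    rw [finSum, List.ofFn_succ, List.foldl_cons]
    obtain ⟨c, hc, _, hiff⟩ := foldl_optStep_adj01 (List.ofFn fun i : Fin m => f i.succ) (f 0)
      (h01 0) (by
        intro x hx
        rw [List.mem_ofFn] at hx
        obtain ⟨j, rfl⟩ := hx
        exact h01 _)
    rw [show optStep (· + ·) none (f 0) = some (f 0) from rfl, hc]
    simp only [Option.getD_some]
    apply hiff.mpr
    induction i using Fin.cases with
    | zero => exact Or.inl hi
    | succ j => exact Or.inr ⟨f j.succ, List.mem_ofFn.mpr ⟨j, rfl⟩, hi⟩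

lemma finSum_adj01_eq_zero {S : Type*} [Add S] {n : ℕ} (f : Fin n → Adj01 S) (i : Fin n)
    (d : Adj01 S) (h : ∀ k, f k = Adj01.zero) : (finSum f).getD d = Adj01.zero := by
  cases n with
  | zero => exact i.elim0
  | succ m =>
    rw [finSum, List.ofFn_succ, List.foldl_cons]
    obtain ⟨c, hc, hc01, hiff⟩ := foldl_optStep_adj01 (List.ofFn fun i : Fin m => f i.succ)
      (f 0) (Or.inl (h 0)) (by
        intro x hx
        rw [List.mem_ofFn] at hx
        obtain ⟨j, rfl⟩ := hx
        exact Or.inl (h _))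
    rw [show optStep (· + ·) none (f 0) = some (f 0) from rfl, hc]
    simp only [Option.getD_some]
    rcases hc01 with h' | h'
    · exact h'
    · exfalso
      rcases hiff.mp h' with h'' | ⟨x, hx, hx1⟩
      · rw [h 0] at h''; cases h''
      · rw [List.mem_ofFn] at hx
        obtain ⟨j, rfl⟩ := hx
        rw [h _] at hx1; cases hx1

lemma finSum_adj01_ne_one {S : Type*} [Add S] {n : ℕ} (f : Fin n → Adj01 S) (i : Fin n)
    (d : Adj01 S) (h : ∀ k, f k ≠ Adj01.one) : (finSum f).getD d ≠ Adj01.one := by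
  cases n with
  | zero => exact i.elim0
  | succ m =>
    rw [finSum, List.ofFn_succ, List.foldl_cons]
    obtain ⟨c, hc, hcne⟩ := foldl_optStep_adj01_ne_one (List.ofFn fun i : Fin m => f i.succ)
      (f 0) (h 0) (by
        intro x hx
        rw [List.mem_ofFn] at hx
        obtain ⟨j, rfl⟩ := hx
        exact h _)
    rw [show optStep (· + ·) none (f 0) = some (f 0) from rfl, hc]
    simpa using hcne

/-- Unitriangularity over `S^{01}`: the adjoined zero strictly below the diagonal, the
adjoined identity on the diagonal, and entries of `S⁰` (i.e. anything except the
adjoined identity) strictly above the diagonal. -/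
def IsU {S : Type*} {n : ℕ} (A : MatSR (Adj01 S) n) : Prop :=
  (∀ i j : Fin n, (j : ℕ) < (i : ℕ) → A i j = Adj01.zero) ∧
  (∀ i : Fin n, A i i = Adj01.one) ∧
  (∀ i j : Fin n, (i : ℕ) < (j : ℕ) → A i j ≠ Adj01.one)

lemma IsU.mul {S : Type*} [Add S] [Mul S] {n : ℕ} {A B : MatSR (Adj01 S) n}
    (hA : IsU A) (hB : IsU B) : IsU (matMul A B) := by
  refine ⟨?_, ?_, ?_⟩
  · intro i j hji
    apply finSum_adj01_eq_zero _ i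
    intro k
    rcases le_or_gt (i : ℕ) (k : ℕ) with h | h
    · rw [hB.1 k j (lt_of_lt_of_le hji h), Adj01.mul_zero]
    · rw [hA.1 i k h, Adj01.zero_mul]
  · intro i
    apply finSum_adj01_eq_one _ i
    · intro k
      rcases lt_trichotomy (k : ℕ) (i : ℕ) with h | h | h
      · rw [hA.1 i k h, Adj01.zero_mul]; exact Or.inl rfl
      · have : k = i := Fin.ext h
        subst this
        rw [hA.2.1 k, hB.2.1 k, Adj01.one_mul]; exact Or.inr rfl
      · rw [hB.1 k i h, Adj01.mul_zero]; exact Or.inl rfl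
    · rw [hA.2.1 i, hB.2.1 i, Adj01.one_mul]
  · intro i j hij
    apply finSum_adj01_ne_one _ i
    intro k
    rcases lt_trichotomy (k : ℕ) (i : ℕ) with h | h | h
    · rw [hA.1 i k h, Adj01.zero_mul]; exact fun h => by cases h
    · have : k = i := Fin.ext h
      subst this
      rw [hA.2.1 k, Adj01.one_mul]
      exact hB.2.2 k j (by omega)
    · rcases lt_trichotomy (k : ℕ) (j : ℕ) with h' | h' | h'
      · exact Adj01.mul_ne_one (hA.2.2 i k h) (hB.2.2 k j h')
      · have : k = j := Fin.ext h'
        subst this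
        rw [hB.2.1 k, Adj01.mul_one]
        exact hA.2.2 i k h
      · rw [hB.1 k j h', Adj01.mul_zero]; exact fun h => by cases h

/-- The multiplicative monoid `U_n(S)` of unitriangular matrices over `S^{01}`. -/
def UMat (S : Type u) (n : ℕ) : Type u := {A : MatSR (Adj01 S) n // IsU A}

instance {S : Type*} [Add S] [Mul S] {n : ℕ} : Mul (UMat S n) :=
  ⟨fun A B => ⟨matMul A.1 B.1, A.2.mul B.2⟩⟩

/-! ### Monogenic subsemirings. -/

/-- The carrier of the monogenic subsemiring `⟨a⟩` generated by `a` is the set of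
positive powers of `a`; in a bipotent semiring it is closed under addition. -/
instance genAdd {S : Type*} [BipotentSemiring S] (a : S) : Add ↥(Set.range (mpow a)) :=
  ⟨fun p q => ⟨p.1 + q.1, by
    rcases BipotentSemiring.bipotent p.1 q.1 with h | h <;> rw [h]
    exacts [p.2, q.2]⟩⟩

instance genMul {S : Type*} [BipotentSemiring S] (a : S) : Mul ↥(Set.range (mpow a)) :=
  ⟨fun p q => ⟨p.1 * q.1, by
    obtain ⟨m, hm⟩ := p.2
    obtain ⟨n, hn⟩ := q.2
    exact ⟨m + n + 1, by rw [← hm, ← hn, mpow_mul_mpow]⟩⟩⟩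

/-! ### Concrete bipotent semirings. -/

/-- The tropical semiring `ℕ_max` of positive natural numbers: addition is `max`,
multiplication is ordinary addition. -/
def NMax : Type := {n : ℕ // 0 < n}

instance : Add NMax := ⟨fun a b => ⟨max a.1 b.1, by have := a.2; have := b.2; omega⟩⟩
instance : Mul NMax := ⟨fun a b => ⟨a.1 + b.1, by have := a.2; have := b.2; omega⟩⟩

/-- The tropical semiring `(-ℕ)_max` of negative integers: addition is `max`,
multiplication is ordinary addition. -/
def NegNMax : Type := {z : ℤ // z < 0}

instance : Add NegNMax := ⟨fun a b => ⟨max a.1 b.1, by have := a.2; have := b.2; omega⟩⟩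
instance : Mul NegNMax := ⟨fun a b => ⟨a.1 + b.1, by have := a.2; have := b.2; omega⟩⟩

/-- The truncated tropical semiring `[k]_max` on `{1,…,k}`: addition is `max`,
multiplication is `a·b = min (a+b) k`. -/
def KMax (k : ℕ) : Type := {n : ℕ // 0 < n ∧ n ≤ k}

instance {k : ℕ} : Add (KMax k) :=
  ⟨fun a b => ⟨max a.1 b.1, by have := a.2; have := b.2; omega⟩⟩
instance {k : ℕ} : Mul (KMax k) :=
  ⟨fun a b => ⟨min (a.1 + b.1) k, by have := a.2; have := b.2; omega⟩⟩

/-- The truncated tropical semiring `[-k]_max` on `{-k,…,-1}`: addition is `max`,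
multiplication is `a·b = max (a+b) (-k)`. -/
def NegKMax (k : ℕ) : Type := {z : ℤ // -(k : ℤ) ≤ z ∧ z ≤ -1}

instance {k : ℕ} : Add (NegKMax k) :=
  ⟨fun a b => ⟨max a.1 b.1, by have := a.2; have := b.2; omega⟩⟩
instance {k : ℕ} : Mul (NegKMax k) :=
  ⟨fun a b => ⟨max (a.1 + b.1) (-(k : ℤ)), by have := a.2; have := b.2; omega⟩⟩

/-- The two-element boolean semifield `𝔹`: `{0,1}` with `0 < 1`, addition `max` (= "or")
and the usual multiplication (= "and"). -/
def BoolSR : Type := Bool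

instance : Add BoolSR := ⟨fun a b => (Bool.or a b : Bool)⟩
instance : Mul BoolSR := ⟨fun a b => (Bool.and a b : Bool)⟩

/-- A chain semiring: a linearly ordered set with addition `max` and multiplication `min`. -/
def ChainSR (L : Type u) [LinearOrder L] : Type u := L

instance {L : Type u} [LinearOrder L] : Add (ChainSR L) := ⟨fun a b => (max a b : L)⟩
instance {L : Type u} [LinearOrder L] : Mul (ChainSR L) := ⟨fun a b => (min a b : L)⟩

/-- The three-element commutative bipotent semiring of Proposition 1: order `A < B < C`
(addition is `max`), every element multiplicatively idempotent, and all products of two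
distinct elements equal to `B`. -/
inductive Three : Type
  | A : Three
  | B : Three
  | C : Three
deriving DecidableEq

instance : Fintype Three := ⟨{Three.A, Three.B, Three.C}, fun x => by cases x <;> simp⟩

def Three.add' : Three → Three → Three
  | .A, y => y
  | x, .A => x
  | .B, y => y
  | x, .B => x
  | .C, .C => .C

def Three.mul' : Three → Three → Three
  | .A, .A => .A
  | .B, .B => .B
  | .C, .C => .C
  | _, _ => .B

instance : Add Three := ⟨Three.add'⟩
instance : Mul Three := ⟨Three.mul'⟩

instance : CommBipotentSemiring Three where
  nonempty' := ⟨Three.A⟩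
  add_assoc' := by decide
  add_comm' := by decide
  mul_assoc' := by decide
  left_distrib' := by decide
  right_distrib' := by decide
  bipotent := by decide
  mul_comm' := by decide

/-- A bundled (possibly zero-less and identity-less) semiring, used to quantify over
semirings inside hypotheses. -/
structure BundledSemiring : Type 1 where
  carrier : Type
  add : carrier → carrier → carrier
  mul : carrier → carrier → carrier
  nonempty' : Nonempty carrier
  add_assoc' : ∀ a b c, add (add a b) c = add a (add b c)
  add_comm' : ∀ a b, add a b = add b a
  mul_assoc' : ∀ a b c, mul (mul a b) c = mul a (mul b c)
  left_distrib' : ∀ a b c, mul a (add b c) = add (mul a b) (mul a c)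
  right_distrib' : ∀ a b c, mul (add a b) c = add (mul a c) (mul b c)

/-! ### Semifields. -/

/-- `z` is a zero element: additively neutral and multiplicatively absorbing. -/
def IsZeroElem {S : Type*} [Add S] [Mul S] (z : S) : Prop :=
  ∀ x : S, z + x = x ∧ x + z = x ∧ z * x = z ∧ x * z = z

/-- `S` is a semifield: a commutative semiring, possibly without zero, whose set of
non-zero elements forms a group under multiplication (with identity `e`). -/
def IsSemifield (S : Type*) [Add S] [Mul S] : Prop :=
  ∃ e : S, ¬ IsZeroElem e ∧
    (∀ x : S, ¬ IsZeroElem x → e * x = x ∧ x * e = x) ∧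
    (∀ x y : S, ¬ IsZeroElem x → ¬ IsZeroElem y → ¬ IsZeroElem (x * y)) ∧
    (∀ x : S, ¬ IsZeroElem x → ∃ y : S, ¬ IsZeroElem y ∧ x * y = e ∧ y * x = e)

/-! ### Truncated tropical semirings. -/

/-- The underlying set `[x,y] ∪ {0}` of the truncated tropical semiring `𝕋_{[x,y]}`
(without the zero element `-∞`), for `0 ≤ x`.  Addition is `max`; multiplication is
`y`-truncated addition `a ⊗ b = min (a+b) y`, with the element `0` acting as the
multiplicative identity. -/
def TTb (x y : ℝ) (_hx : 0 ≤ x) : Type := {r : ℝ // r = 0 ∨ (x ≤ r ∧ r ≤ y)}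

namespace TTb

protected def add {x y : ℝ} {hx : 0 ≤ x} (a b : TTb x y hx) : TTb x y hx :=
  ⟨max a.1 b.1, by rcases max_choice a.1 b.1 with h | h <;> rw [h]
                   exacts [a.2, b.2]⟩

protected noncomputable def mul {x y : ℝ} {hx : 0 ≤ x} (a b : TTb x y hx) : TTb x y hx :=
  if ha : a.1 = 0 then b else if hb : b.1 = 0 then a else
    ⟨min (a.1 + b.1) y, by
      rcases a.2 with h | h
      · exact absurd h ha
      rcases b.2 with h' | h'
      · exact absurd h' hb
      right
      exact ⟨le_min (by linarith [h.1, h'.1]) (by linarith [h.1, h.2]), min_le_right _ _⟩⟩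

instance {x y : ℝ} {hx : 0 ≤ x} : Add (TTb x y hx) := ⟨TTb.add⟩
noncomputable instance {x y : ℝ} {hx : 0 ≤ x} : Mul (TTb x y hx) := ⟨TTb.mul⟩

end TTb

/-- The truncated tropical semiring `𝕋_{[x,y]}` (for `0 ≤ x < y`): the real interval
`[x,y]` together with a multiplicative identity `0` and a zero `-∞`, with addition
`max` and multiplication the `y`-truncated addition `a ⊗ b = min (a+b) y`. -/
abbrev TT (x y : ℝ) (hx : 0 ≤ x) : Type := Adj0 (TTb x y hx)

/-- The multiplicative identity `0` of `𝕋_{[x,y]}`. -/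
noncomputable def ttId (x y : ℝ) (hx : 0 ≤ x) : TT x y hx := Adj0.elem ⟨0, Or.inl rfl⟩

lemma ttId_mul {x y : ℝ} {hx : 0 ≤ x} (b : TT x y hx) : ttId x y hx * b = b := by
  cases b with
  | zero => rfl
  | elem e =>
    show Adj0.elem (TTb.mul ⟨0, Or.inl rfl⟩ e) = Adj0.elem e
    first
      | (unfold TTb.mul; rw [dif_pos rfl])
      | exact congrArg Adj0.elem (dif_pos rfl)
      | simp [TTb.mul]

/-- The subsemigroup `S` of `M_2(𝕋_{[1,z]})` of matrices of the form `[[0,a],[-∞,b]]`. -/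
noncomputable def UpperS (z : ℝ) (hz : (0:ℝ) ≤ 1) : Type :=
  {A : MatSR (TT 1 z hz) 2 // A 0 0 = ttId 1 z hz ∧ A 1 0 = Adj0.zero}

/-- The subsemigroup `S'` of `M_2(𝕋_{[1,z]})` of matrices of the form `[[0,-∞],[a,b]]`. -/
noncomputable def LowerS (z : ℝ) (hz : (0:ℝ) ≤ 1) : Type :=
  {A : MatSR (TT 1 z hz) 2 // A 0 0 = ttId 1 z hz ∧ A 0 1 = Adj0.zero}

noncomputable instance {z : ℝ} {hz : (0:ℝ) ≤ 1} : Mul (UpperS z hz) :=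
  ⟨fun A B => ⟨A.1 * B.1, by
    obtain ⟨hA1, hA2⟩ := A.2
    obtain ⟨hB1, hB2⟩ := B.2
    constructor
    · show A.1 0 0 * B.1 0 0 + A.1 0 1 * B.1 1 0 = ttId 1 z hz
      rw [hA1, hB1, hB2, ttId_mul, Adj0.mul_zero, Adj0.add_zero]
    · show A.1 1 0 * B.1 0 0 + A.1 1 1 * B.1 1 0 = Adj0.zero
      rw [hA2, hB2, Adj0.zero_mul, Adj0.mul_zero, Adj0.add_zero]⟩⟩

noncomputable instance {z : ℝ} {hz : (0:ℝ) ≤ 1} : Mul (LowerS z hz) :=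
  ⟨fun A B => ⟨A.1 * B.1, by
    obtain ⟨hA1, hA2⟩ := A.2
    obtain ⟨hB1, hB2⟩ := B.2
    constructor
    · show A.1 0 0 * B.1 0 0 + A.1 0 1 * B.1 1 0 = ttId 1 z hz
      rw [hA1, hB1, hA2, ttId_mul, Adj0.zero_mul, Adj0.add_zero]
    · show A.1 0 0 * B.1 0 1 + A.1 0 1 * B.1 1 1 = Adj0.zero
      rw [hA1, hB2, hA2, ttId_mul, Adj0.zero_mul, Adj0.add_zero]⟩⟩
namespace Stmt6

lemma foldl_optStep_some {S : Type*} (op : S → S → S) (l : List S) (a : S) :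
    l.foldl (optStep op) (some a) = some (l.foldl op a) := by
  induction l generalizing a with
  | nil => rfl
  | cons x l ih => exact ih (op a x)

section SumLemmas

variable {S : Type u} [Add S]

lemma lfold_const (l : List (Adj01 S)) (a : Adj01 S) (h : ∀ x ∈ l, x = Adj01.zero) :
    l.foldl (· + ·) a = a := by
  induction l generalizing a with
  | nil => rfl
  | cons x l ih =>
    rw [List.foldl_cons, h x (by simp), Adj01.add_zero]
    exact ih a fun y hy => h y (by simp [hy])

lemma lfold_single {n : ℕ} (g : Fin n → Adj01 S) (u : Fin n)
    (h : ∀ k, k ≠ u → g k = Adj01.zero) (a : Adj01 S) :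
    (List.ofFn g).foldl (· + ·) a = a + g u := by
  induction n generalizing a with
  | zero => exact u.elim0
  | succ m ih =>
    rw [List.ofFn_succ, List.foldl_cons]
    induction u using Fin.cases with
    | zero =>
      rw [lfold_const _ _ (fun x hx => ?_)]
      rw [List.mem_ofFn] at hx
      obtain ⟨i, rfl⟩ := hx
      exact h i.succ (Fin.succ_ne_zero i)
    | succ j =>
      rw [h 0 (Fin.succ_ne_zero j).symm, Adj01.add_zero]
      exact ih (fun i => g i.succ) j (fun i hi => h i.succ (fun hh => hi (Fin.succ_injective _ hh))) a

lemma lfold_pair {n : ℕ} (g : Fin n → Adj01 S) (u v : Fin n) (huv : u < v)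
    (h : ∀ k, k ≠ u → k ≠ v → g k = Adj01.zero) (a : Adj01 S) :
    (List.ofFn g).foldl (· + ·) a = a + g u + g v := by
  induction n generalizing a with
  | zero => exact u.elim0
  | succ m ih =>
    rw [List.ofFn_succ, List.foldl_cons]
    induction u using Fin.cases with
    | zero =>
      induction v using Fin.cases with
      | zero => exact absurd huv (lt_irrefl _)
      | succ w =>
        exact lfold_single (fun i => g i.succ) w
          (fun i hi => h i.succ (Fin.succ_ne_zero i) (fun hh => hi (Fin.succ_injective _ hh))) _
    | succ j =>
      induction v using Fin.cases with
      | zero => exact absurd huv (by simp [Fin.lt_def])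
      | succ w =>
        rw [h 0 (Fin.succ_ne_zero j).symm (Fin.succ_ne_zero w).symm, Adj01.add_zero]
        exact ih (fun i => g i.succ) j w (by rwa [← Fin.succ_lt_succ_iff])
          (fun i hi hi' => h i.succ (fun hh => hi (Fin.succ_injective _ hh))
            (fun hh => hi' (Fin.succ_injective _ hh))) a

lemma finSum_single {n : ℕ} (f : Fin n → Adj01 S) (u : Fin n)
    (h : ∀ k, k ≠ u → f k = Adj01.zero) (d : Adj01 S) :
    (finSum f).getD d = f u := by
  cases n with
  | zero => exact u.elim0
  | succ m =>
    rw [finSum, List.ofFn_succ, List.foldl_cons,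
      show optStep (· + ·) none (f 0) = some (f 0) from rfl, foldl_optStep_some,
      Option.getD_some]
    induction u using Fin.cases with
    | zero =>
      apply lfold_const
      intro x hx
      rw [List.mem_ofFn] at hx
      obtain ⟨i, rfl⟩ := hx
      exact h i.succ (Fin.succ_ne_zero i)
    | succ j =>
      rw [lfold_single (fun i => f i.succ) j
        (fun i hi => h i.succ (fun hh => hi (Fin.succ_injective _ hh))),
        h 0 (Fin.succ_ne_zero j).symm, Adj01.zero_add]

lemma finSum_pair {n : ℕ} (f : Fin n → Adj01 S) (u v : Fin n) (huv : u < v)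
    (h : ∀ k, k ≠ u → k ≠ v → f k = Adj01.zero) (d : Adj01 S) :
    (finSum f).getD d = f u + f v := by
  cases n with
  | zero => exact u.elim0
  | succ m =>
    rw [finSum, List.ofFn_succ, List.foldl_cons,
      show optStep (· + ·) none (f 0) = some (f 0) from rfl, foldl_optStep_some,
      Option.getD_some]
    induction u using Fin.cases with
    | zero =>
      induction v using Fin.cases with
      | zero => exact absurd huv (lt_irrefl _)
      | succ w =>
        exact lfold_single (fun i => f i.succ) w
          (fun i hi => h i.succ (Fin.succ_ne_zero i) (fun hh => hi (Fin.succ_injective _ hh))) _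
    | succ j =>
      induction v using Fin.cases with
      | zero => exact absurd huv (by simp [Fin.lt_def])
      | succ w =>
        rw [lfold_pair (fun i => f i.succ) j w (by rwa [← Fin.succ_lt_succ_iff])
          (fun i hi hi' => h i.succ (fun hh => hi (Fin.succ_injective _ hh))
            (fun hh => hi' (Fin.succ_injective _ hh))),
          h 0 (Fin.succ_ne_zero j).symm (Fin.succ_ne_zero w).symm, Adj01.zero_add]

end SumLemmas

section Matrices

/-- The key matrix shape: identity plus entries `x` at `(0,1)`, `y` at `(1,2)`,
`c` at `(0,2)`. -/
def Pm (n : ℕ) (x y : NMax) (c : Adj01 NMax) : MatSR (Adj01 NMax) n := fun i j =>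
  if i.val = j.val then Adj01.one
  else if i.val = 0 ∧ j.val = 1 then Adj01.elem x
  else if i.val = 1 ∧ j.val = 2 then Adj01.elem y
  else if i.val = 0 ∧ j.val = 2 then c
  else Adj01.zero

variable {n : ℕ} {x y : NMax} {c : Adj01 NMax} {i j : Fin n}

lemma Pm_diag (h : i.val = j.val) : Pm n x y c i j = Adj01.one := by
  simp only [Pm]; split_ifs <;> first | rfl | omega

lemma Pm_below (h : j.val < i.val) : Pm n x y c i j = Adj01.zero := by
  simp only [Pm]; split_ifs <;> first | rfl | omega

lemma Pm_01 (h1 : i.val = 0) (h2 : j.val = 1) : Pm n x y c i j = Adj01.elem x := by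
  simp only [Pm]; split_ifs <;> first | rfl | omega

lemma Pm_12 (h1 : i.val = 1) (h2 : j.val = 2) : Pm n x y c i j = Adj01.elem y := by
  simp only [Pm]; split_ifs <;> first | rfl | omega

lemma Pm_02 (h1 : i.val = 0) (h2 : j.val = 2) : Pm n x y c i j = c := by
  simp only [Pm]; split_ifs <;> first | rfl | omega

lemma Pm_other (h1 : i.val ≠ j.val) (h2 : ¬(i.val = 0 ∧ j.val = 1))
    (h3 : ¬(i.val = 1 ∧ j.val = 2)) (h4 : ¬(i.val = 0 ∧ j.val = 2)) :
    Pm n x y c i j = Adj01.zero := by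
  simp only [Pm]; split_ifs <;> first | rfl | omega

lemma isU_Em (n : ℕ) (a b : NMax) : IsU (Pm n a b Adj01.zero) := by
  refine ⟨fun i j h => Pm_below h, fun i => Pm_diag rfl, fun i j hij => ?_⟩
  simp only [Pm]
  split_ifs <;> first | (exfalso; omega) | simp

lemma Pm_mul (n : ℕ) (h3 : 3 ≤ n) (x y a b : NMax) (c : Adj01 NMax) :
    matMul (Pm n x y c) (Pm n a b Adj01.zero) =
      Pm n (a + x) (b + y) (Adj01.elem (x * b) + c) := by
  have h0' : (0:ℕ) < n := by omega
  have h1' : (1:ℕ) < n := by omega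
  have h2' : (2:ℕ) < n := by omega
  funext i j
  simp only [matMul]
  rcases lt_trichotomy (i.val) (j.val) with hij | hij | hij
  · by_cases c01 : i.val = 0 ∧ j.val = 1
    · refine Eq.trans (finSum_pair _ (⟨0, h0'⟩ : Fin n) (⟨1, h1'⟩ : Fin n)
        (by simp [Fin.lt_def]) ?_ _) ?_
      swap
      · rw [Pm_diag (show i.val = 0 from c01.1), Pm_01 rfl c01.2, Adj01.one_mul,
          Pm_01 c01.1 rfl, Pm_diag (show (1:ℕ) = j.val from c01.2.symm), Adj01.mul_one,
          Adj01.elem_add_elem]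
        exact (Pm_01 c01.1 c01.2).symm
      · intro k hk0 hk1
        have hk : 2 ≤ k.val := by
          rcases Nat.lt_or_ge k.val 2 with h | h
          · exfalso
            interval_cases hkk : k.val
            · exact hk0 (Fin.ext hkk)
            · exact hk1 (Fin.ext hkk)
          · exact h
        rw [Pm_below (show j.val < k.val by omega), Adj01.mul_zero]
    · by_cases c12 : i.val = 1 ∧ j.val = 2
      · refine Eq.trans (finSum_pair _ (⟨1, h1'⟩ : Fin n) (⟨2, h2'⟩ : Fin n)
          (by simp [Fin.lt_def]) ?_ _) ?_
        swap
        · rw [Pm_diag (show i.val = 1 from c12.1), Pm_12 rfl c12.2, Adj01.one_mul,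
            Pm_12 c12.1 rfl, Pm_diag (show (2:ℕ) = j.val from c12.2.symm), Adj01.mul_one,
            Adj01.elem_add_elem]
          exact (Pm_12 c12.1 c12.2).symm
        · intro k hk1 hk2
          rcases Nat.lt_or_ge k.val 1 with h | h
          · rw [Pm_below (show k.val < i.val by omega), Adj01.zero_mul]
          · have hk : 3 ≤ k.val := by
              rcases Nat.lt_or_ge k.val 3 with h' | h'
              · exfalso
                interval_cases hkk : k.val
                · exact hk1 (Fin.ext hkk)
                · exact hk2 (Fin.ext hkk)
              · exact h'
            rw [Pm_below (show j.val < k.val by omega), Adj01.mul_zero]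
      · by_cases c02 : i.val = 0 ∧ j.val = 2
        · refine Eq.trans (finSum_pair _ (⟨1, h1'⟩ : Fin n) (⟨2, h2'⟩ : Fin n)
            (by simp [Fin.lt_def]) ?_ _) ?_
          swap
          · rw [Pm_01 c02.1 rfl, Pm_12 rfl c02.2, Adj01.elem_mul_elem,
              Pm_02 c02.1 rfl, Pm_diag (show (2:ℕ) = j.val from c02.2.symm), Adj01.mul_one]
            exact (Pm_02 c02.1 c02.2).symm
          · intro k hk1 hk2
            rcases Nat.lt_or_ge k.val 1 with h | h
            · rw [Pm_diag (show i.val = k.val by omega), Adj01.one_mul,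
                Pm_02 (by omega) c02.2]
            · have hk : 3 ≤ k.val := by
                rcases Nat.lt_or_ge k.val 3 with h' | h'
                · exfalso
                  interval_cases hkk : k.val
                  · exact hk1 (Fin.ext hkk)
                  · exact hk2 (Fin.ext hkk)
                · exact h'
              rw [Pm_below (show j.val < k.val by omega), Adj01.mul_zero]
        · refine Eq.trans (finSum_adj01_eq_zero _ i _ ?_)
            (Pm_other (by omega) c01 c12 c02).symm
          intro k
          by_cases hk : k.val = i.val
          · rw [Pm_diag hk.symm, Adj01.one_mul,
              Pm_other (by omega) (by omega) (by omega) (by omega)]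
          · by_cases hk2 : i.val = 0 ∧ k.val = 1
            · rw [Pm_01 hk2.1 hk2.2,
                Pm_other (by omega) (by omega) (by omega) (by omega), Adj01.mul_zero]
            · by_cases hk3 : i.val = 1 ∧ k.val = 2
              · rw [Pm_12 hk3.1 hk3.2,
                  Pm_other (by omega) (by omega) (by omega) (by omega), Adj01.mul_zero]
              · by_cases hk4 : i.val = 0 ∧ k.val = 2
                · rw [Pm_02 hk4.1 hk4.2,
                    Pm_other (by omega) (by omega) (by omega) (by omega), Adj01.mul_zero]
                · rw [Pm_other (by omega) hk2 hk3 hk4, Adj01.zero_mul]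
  · refine Eq.trans (finSum_adj01_eq_one _ i _ ?_ ?_) (Pm_diag hij).symm
    · intro k
      rcases lt_trichotomy k.val i.val with h | h | h
      · rw [Pm_below h, Adj01.zero_mul]; exact Or.inl rfl
      · rw [Pm_diag h.symm, Adj01.one_mul, Pm_diag (by omega)]; exact Or.inr rfl
      · rw [Pm_below (show j.val < k.val by omega), Adj01.mul_zero]; exact Or.inl rfl
    · rw [Pm_diag rfl, Adj01.one_mul, Pm_diag hij]
  · refine Eq.trans (finSum_adj01_eq_zero _ i _ ?_) (Pm_below hij).symm
    intro k
    rcases Nat.lt_or_ge k.val i.val with h | h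
    · rw [Pm_below h, Adj01.zero_mul]
    · rw [Pm_below (show j.val < k.val by omega), Adj01.mul_zero]

end Matrices

section Folds

/-- Elementary unitriangular matrix with `(0,1)` entry `p.1` and `(1,2)` entry `p.2`. -/
def Efun (n : ℕ) (p : NMax × NMax) : UMat NMax n := ⟨Pm n p.1 p.2 Adj01.zero, isU_Em n p.1 p.2⟩

/-- The `ℕ`-level transition: track the running maximum of first components and the
running maximum of sums `x + b`. -/
def nst : ℕ × ℕ → ℕ × ℕ → ℕ × ℕ := fun s p => (max p.1 s.1, max (s.1 + p.2) s.2)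

def cval : Adj01 NMax → ℕ
  | .elem e => e.1
  | _ => 0

lemma fold_inv (n : ℕ) (h3 : 3 ≤ n) (L : List (NMax × NMax)) :
    ∀ (x y : NMax) (c : Adj01 NMax) (A : UMat NMax n), A.1 = Pm n x y c →
    ∃ x' y' c', (L.foldl (fun M p => M * Efun n p) A).1 = Pm n x' y' c' ∧
      (L.map fun p => (p.1.1, p.2.1)).foldl nst (x.1, cval c) = (x'.1, cval c') := by
  induction L with
  | nil => exact fun x y c A hA => ⟨x, y, c, hA, rfl⟩
  | cons p L ih =>
    intro x y c A hA
    have hstep : (A * Efun n p).1 =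
        Pm n (p.1 + x) (p.2 + y) (Adj01.elem (x * p.2) + c) := by
      show matMul A.1 (Efun n p).1 = _
      rw [hA]
      exact Pm_mul n h3 x y p.1 p.2 c
    obtain ⟨x', y', c', h1, h2⟩ := ih (p.1 + x) (p.2 + y) (Adj01.elem (x * p.2) + c) _ hstep
    refine ⟨x', y', c', h1, ?_⟩
    rw [List.map_cons, List.foldl_cons, ← h2]
    congr 1
    show (max p.1.1 x.1, max (x.1 + p.2.1) (cval c)) = ((p.1 + x).1, cval (Adj01.elem (x * p.2) + c))
    cases c with
    | zero =>
      rw [Adj01.add_zero]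
      show (max p.1.1 x.1, max (x.1 + p.2.1) 0) = ((p.1 + x).1, (x * p.2).1)
      rw [Nat.max_zero]
      rfl
    | one =>
      rw [Adj01.elem_add_one]
      show (max p.1.1 x.1, max (x.1 + p.2.1) 0) = ((p.1 + x).1, (x * p.2).1)
      rw [Nat.max_zero]
      rfl
    | elem m =>
      rw [Adj01.elem_add_elem]
      show (max p.1.1 x.1, max (x.1 + p.2.1) m.1) = ((p.1 + x).1, (x * p.2 + m).1)
      rfl

lemma finProd_eval (n : ℕ) (h3 : 3 ≤ n) (k' : ℕ) (t : Fin (k' + 1) → NMax × NMax) :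
    ∃ B : UMat NMax n, finProd (fun i => Efun n (t i)) = some B ∧
      ∃ x' y' c', B.1 = Pm n x' y' c' ∧
        cval c' = ((List.ofFn fun i : Fin k' => ((t i.succ).1.1, (t i.succ).2.1)).foldl
          nst ((t 0).1.1, 0)).2 := by
  have hFP : finProd (fun i => Efun n (t i)) =
      some ((List.ofFn fun i : Fin k' => t i.succ).foldl (fun M p => M * Efun n p)
        (Efun n (t 0))) := by
    rw [finProd, List.ofFn_succ, List.foldl_cons,
      show optStep (· * ·) none (Efun n (t 0)) = some (Efun n (t 0)) from rfl,
      foldl_optStep_some]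
    congr 1
    rw [← List.foldl_map (f := fun p => Efun n p) (g := (· * ·)), List.map_ofFn]
    rfl
  obtain ⟨x', y', c', h1, h2⟩ := fold_inv n h3 (List.ofFn fun i : Fin k' => t i.succ)
    (t 0).1 (t 0).2 Adj01.zero (Efun n (t 0)) rfl
  refine ⟨_, hFP, x', y', c', h1, ?_⟩
  rw [List.map_ofFn] at h2
  have := congrArg Prod.snd h2
  simpa [cval, Function.comp_def] using this.symm

lemma nst_fst_le (l : List (ℕ × ℕ)) : ∀ s : ℕ × ℕ, s.1 ≤ (l.foldl nst s).1 := by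
  induction l with
  | nil => exact fun s => le_rfl
  | cons p l ih =>
    intro s
    exact le_trans (le_max_right p.1 s.1) (ih (nst s p))

lemma nst_snd_le (l : List (ℕ × ℕ)) : ∀ s : ℕ × ℕ, s.2 ≤ (l.foldl nst s).2 := by
  induction l with
  | nil => exact fun s => le_rfl
  | cons p l ih =>
    intro s
    exact le_trans (le_max_right (s.1 + p.2) s.2) (ih (nst s p))

lemma nst_mem_fst (l : List (ℕ × ℕ)) (u : ℕ × ℕ) (hu : u ∈ l) :
    ∀ s : ℕ × ℕ, u.1 ≤ (l.foldl nst s).1 := by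
  induction l with
  | nil => exact absurd hu List.not_mem_nil
  | cons p l ih =>
    intro s
    rcases List.mem_cons.mp hu with rfl | hu'
    · exact le_trans (le_max_left u.1 s.1) (nst_fst_le l (nst s u))
    · exact ih hu' (nst s p)

lemma nst_lb1 (l : List (ℕ × ℕ)) (v : ℕ × ℕ) (hv : v ∈ l) :
    ∀ s : ℕ × ℕ, s.1 + v.2 ≤ (l.foldl nst s).2 := by
  induction l with
  | nil => exact absurd hv List.not_mem_nil
  | cons p l ih =>
    intro s
    rcases List.mem_cons.mp hv with rfl | hv'
    · exact le_trans (le_max_left (s.1 + v.2) s.2) (nst_snd_le l (nst s v))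
    · exact le_trans (Nat.add_le_add_right (le_max_right p.1 s.1) v.2) (ih hv' (nst s p))

lemma nst_lb2 (l1 l2 : List (ℕ × ℕ)) (u v : ℕ × ℕ) (hu : u ∈ l1) (s : ℕ × ℕ) :
    u.1 + v.2 ≤ ((l1 ++ v :: l2).foldl nst s).2 := by
  rw [List.foldl_append]
  exact le_trans (Nat.add_le_add_right (nst_mem_fst l1 u hu s) v.2)
    (nst_lb1 (v :: l2) v (by simp) (l1.foldl nst s))

lemma nst_ub (K : ℕ) (l : List (ℕ × ℕ)) : ∀ x cc : ℕ,
    (∀ p ∈ l, p.1 + p.2 = K + 1) → (∀ p ∈ l, x < p.1) →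
    l.Pairwise (fun p q => p.1 < q.1) → (l.foldl nst (x, cc)).2 ≤ max cc K := by
  induction l with
  | nil => exact fun x cc _ _ _ => le_max_left cc K
  | cons p l ih =>
    intro x cc hsum hx hpw
    rw [List.foldl_cons]
    have hx' : x < p.1 := hx p (by simp)
    have hp1 : nst (x, cc) p = (p.1, max (x + p.2) cc) := by
      simp only [nst]
      rw [Nat.max_eq_left (le_of_lt hx')]
    rw [hp1]
    have hpw' := List.pairwise_cons.mp hpw
    have hres := ih p.1 (max (x + p.2) cc) (fun q hq => hsum q (by simp [hq]))
      (fun q hq => hpw'.1 q hq) hpw'.2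
    have hxp : x + p.2 ≤ K := by
      have := hsum p (by simp)
      omega
    omega

end Folds

section Perm

lemma exists_inversion {k : ℕ} (σ : Equiv.Perm (Fin k)) (h : σ ≠ Equiv.refl (Fin k)) :
    ∃ p q : Fin k, p < q ∧ σ q < σ p := by
  by_contra hc
  push_neg at hc
  have hsm : StrictMono σ := by
    intro p q hpq
    exact lt_of_le_of_ne (hc p q hpq) (fun he => (ne_of_lt hpq) (σ.injective he))
  have hf : ∀ m : ℕ → ℕ, StrictMono m → ∀ i, i ≤ m i := by
    intro m hm i
    induction i with
    | zero => exact Nat.zero_le _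
    | succ j ihj => exact Nat.lt_of_le_of_lt ihj (hm (Nat.lt_succ_self j))
  have key : ∀ (τ : Equiv.Perm (Fin k)), StrictMono τ → ∀ i : Fin k, (i : ℕ) ≤ (τ i : ℕ) := by
    intro τ hτ i
    set m : ℕ → ℕ := fun a => if ha : a < k then (τ ⟨a, ha⟩ : ℕ) else a with hm
    have hsmm : StrictMono m := by
      intro a b hab
      simp only [hm]
      split_ifs with ha hb hb
      · exact hτ (show (⟨a, ha⟩ : Fin k) < ⟨b, hb⟩ from hab)
      · exact lt_of_lt_of_le (τ _).isLt (le_of_not_gt hb)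
      · omega
      · exact hab
    have := hf m hsmm i
    simpa [hm, i.isLt] using this
  have hinv : StrictMono (σ.symm) := by
    intro a b hab
    rcases lt_trichotomy (σ.symm a) (σ.symm b) with h' | h' | h'
    · exact h'
    · exact absurd (σ.symm.injective h') (ne_of_lt hab)
    · exfalso
      have := hsm h'
      simp only [Equiv.apply_symm_apply] at this
      exact absurd hab (not_lt_of_gt this)
  apply h
  apply Equiv.ext
  intro i
  have h1 : (i : ℕ) ≤ (σ i : ℕ) := key σ hsm i
  have h2 : ((σ i : Fin k) : ℕ) ≤ (σ.symm (σ i) : ℕ) := key σ.symm hinv (σ i)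
  simp only [Equiv.symm_apply_apply] at h2
  simp only [Equiv.refl_apply]
  exact Fin.ext (le_antisymm h2 h1)

end Perm

section Small

lemma nmax_add_comm (a b : NMax) : a + b = b + a := Subtype.ext (Nat.max_comm a.1 b.1)

lemma adj01_add_comm (a b : Adj01 NMax) : a + b = b + a := by
  cases a <;> cases b <;>
    simp only [Adj01.zero_add, Adj01.add_zero, Adj01.one_add_one, Adj01.one_add_elem,
      Adj01.elem_add_one, Adj01.elem_add_elem]
  rw [nmax_add_comm]

lemma umat_comm {n : ℕ} (hn2 : n ≤ 2) (A B : UMat NMax n) : A * B = B * A := by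
  apply Subtype.ext
  funext i j
  show matMul A.1 B.1 i j = matMul B.1 A.1 i j
  rcases lt_trichotomy (i : ℕ) (j : ℕ) with h | h | h
  · have hn : n = 2 := by have := j.isLt; omega
    subst hn
    have hi : i = 0 := Fin.ext (by have := j.isLt; simp; omega)
    have hj : j = 1 := Fin.ext (by have := j.isLt; simp; omega)
    subst hi; subst hj
    have key : ∀ X Y : UMat NMax 2, matMul X.1 Y.1 0 1 = Y.1 0 1 + X.1 0 1 := by
      intro X Y
      have := finSum_pair (fun k => X.1 0 k * Y.1 k 1) (0 : Fin 2) (1 : Fin 2)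
        (by simp [Fin.lt_def]) (fun k hk0 hk1 => by
          exfalso
          have hk := k.isLt
          rcases Nat.lt_or_ge k.val 1 with h' | h'
          · exact hk0 (Fin.ext (by omega))
          · exact hk1 (Fin.ext (by omega))) (X.1 0 1 * Y.1 0 1)
      show (finSum fun k => X.1 0 k * Y.1 k 1).getD (X.1 0 1 * Y.1 0 1) = _
      rw [this, X.2.2.1 0, Y.2.2.1 1, Adj01.one_mul, Adj01.mul_one]
    rw [key A B, key B A, adj01_add_comm]
  · have hij : i = j := Fin.ext h
    subst hij
    rw [(A.2.mul B.2).2.1 i, (B.2.mul A.2).2.1 i]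
  · rw [(A.2.mul B.2).1 i j h, (B.2.mul A.2).1 i j h]

lemma sp_of_le_two {n : ℕ} (hn2 : n ≤ 2) : StronglyPermutable (UMat NMax n) := by
  refine ⟨2, le_rfl, fun s => ⟨Equiv.swap 0 1, ?_, ?_⟩⟩
  · intro hcon
    have := congrArg (fun e : Equiv.Perm (Fin 2) => e 0) hcon
    simp only [Equiv.swap_apply_left, Equiv.refl_apply] at this
    exact absurd this (by decide)
  · have h2 : ∀ t : Fin 2 → UMat NMax n, finProd t = some (t 0 * t 1) := by
      intro t
      rw [finProd, show List.ofFn t = [t 0, t 1] by simp [List.ofFn_succ]]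
      rfl
    rw [h2, h2]
    simp only [Equiv.swap_apply_left, Equiv.swap_apply_right]
    exact congrArg some (umat_comm hn2 (s 1) (s 0))

end Small

lemma not_sp_of_ge_three {n : ℕ} (h3 : 3 ≤ n) : ¬ StronglyPermutable (UMat NMax n) := by
  rintro ⟨k, hk2, hKP⟩
  obtain ⟨k', rfl⟩ : ∃ k', k = k' + 2 := ⟨k - 2, by omega⟩
  obtain ⟨t, ht1, ht2⟩ : ∃ t : Fin (k' + 2) → NMax × NMax,
      (∀ j, (t j).1.1 = j.val + 1) ∧ (∀ j, (t j).2.1 = k' + 2 - j.val) :=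
    ⟨fun i => (⟨i.val + 1, by omega⟩, ⟨k' + 2 - i.val, by have := i.isLt; omega⟩),
      fun j => rfl, fun j => rfl⟩
  obtain ⟨σ, hσ, heq⟩ := hKP (fun i => Efun n (t i))
  obtain ⟨B1, hB1, x1, y1, c1, hP1, hv1⟩ := finProd_eval n h3 (k' + 1) (fun i => t (σ i))
  obtain ⟨B2, hB2, x2, y2, c2, hP2, hv2⟩ := finProd_eval n h3 (k' + 1) t
  have e1 : finProd (fun i => Efun n (t (σ i))) = some B1 := hB1
  have heq' : finProd (fun i => Efun n (t (σ i))) = finProd (fun i => Efun n (t i)) := heq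
  have hBB : B1 = B2 := Option.some.inj ((e1.symm.trans heq').trans hB2)
  have hPP : Pm n x1 y1 c1 = Pm n x2 y2 c2 := by rw [← hP1, ← hP2, hBB]
  have hcc : c1 = c2 := by
    have h02 := congrFun (congrFun hPP (⟨0, by omega⟩ : Fin n)) (⟨2, by omega⟩ : Fin n)
    rwa [Pm_02 rfl rfl, Pm_02 rfl rfl] at h02
  have hval : ((List.ofFn fun i : Fin (k' + 1) =>
        ((t (σ i.succ)).1.1, (t (σ i.succ)).2.1)).foldl nst ((t (σ 0)).1.1, 0)).2 =
      ((List.ofFn fun i : Fin (k' + 1) =>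
        ((t i.succ).1.1, (t i.succ).2.1)).foldl nst ((t 0).1.1, 0)).2 := by
    have := hv1.symm.trans ((congrArg cval hcc).trans hv2)
    exact this
  -- upper bound for the identity arrangement
  have hub : ((List.ofFn fun i : Fin (k' + 1) =>
      ((t i.succ).1.1, (t i.succ).2.1)).foldl nst ((t 0).1.1, 0)).2 ≤ k' + 2 := by
    have h0 : (t 0).1.1 = 1 := ht1 0
    rw [h0]
    have := nst_ub (k' + 2) (List.ofFn fun i : Fin (k' + 1) =>
        ((t i.succ).1.1, (t i.succ).2.1)) 1 0 ?_ ?_ ?_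
    · simpa using this
    · intro p hp
      rw [List.mem_ofFn] at hp
      obtain ⟨i, rfl⟩ := hp
      have hi := i.isLt
      simp only [ht1, ht2, Fin.val_succ]
      omega
    · intro p hp
      rw [List.mem_ofFn] at hp
      obtain ⟨i, rfl⟩ := hp
      simp only [ht1, Fin.val_succ]
      omega
    · rw [List.pairwise_ofFn]
      intro i j hij
      simp only [ht1, Fin.val_succ]
      have := Fin.lt_def.mp hij
      omega
  -- lower bound for the permuted arrangement
  obtain ⟨p, q, hpq, hinvr⟩ := exists_inversion σ hσ
  have hpq' : p.val < q.val := Fin.lt_def.mp hpq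
  have hinv' : (σ q).val < (σ p).val := Fin.lt_def.mp hinvr
  have hq2 := q.isLt
  have hσq2 := (σ q).isLt
  set f : Fin (k' + 1) → ℕ × ℕ :=
    fun i => ((t (σ i.succ)).1.1, (t (σ i.succ)).2.1) with hf
  have hqq : ((⟨q.val - 1, by omega⟩ : Fin (k' + 1))).succ = q := Fin.ext (by simp; omega)
  have hvv : f ⟨q.val - 1, by omega⟩ = ((σ q).val + 1, k' + 2 - (σ q).val) := by
    rw [hf]; simp only [hqq, ht1, ht2]
  have hlb : k' + 4 ≤ ((List.ofFn f).foldl nst ((t (σ 0)).1.1, 0)).2 := by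
    rcases Nat.eq_zero_or_pos p.val with hp0 | hp1
    · have hp : p = 0 := Fin.ext hp0
      have hmem : ((σ q).val + 1, k' + 2 - (σ q).val) ∈ List.ofFn f := by
        rw [List.mem_ofFn]
        exact ⟨⟨q.val - 1, by omega⟩, hvv⟩
      have h0 : (t (σ 0)).1.1 = (σ p).val + 1 := by rw [hp]; exact ht1 (σ 0)
      have hfin := nst_lb1 (List.ofFn f) _ hmem ((t (σ 0)).1.1, 0)
      simp only at hfin
      omega
    · have hpp : ((⟨p.val - 1, by omega⟩ : Fin (k' + 1))).succ = p := Fin.ext (by simp; omega)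
      have huu : f ⟨p.val - 1, by omega⟩ = ((σ p).val + 1, k' + 2 - (σ p).val) := by
        rw [hf]; simp only [hpp, ht1, ht2]
      have hql : q.val - 1 < (List.ofFn f).length := by rw [List.length_ofFn]; omega
      have hgetv : (List.ofFn f)[q.val - 1]'hql = ((σ q).val + 1, k' + 2 - (σ q).val) := by
        rw [List.getElem_ofFn]; exact hvv
      have hsplit : List.ofFn f = (List.ofFn f).take (q.val - 1) ++
          (((σ q).val + 1, k' + 2 - (σ q).val) :: (List.ofFn f).drop (q.val - 1 + 1)) := by
        conv_lhs => rw [← List.take_append_drop (q.val - 1) (List.ofFn f)]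
        rw [List.drop_eq_getElem_cons hql, hgetv]
      have hpl : p.val - 1 < ((List.ofFn f).take (q.val - 1)).length := by
        rw [List.length_take, List.length_ofFn]; omega
      have humem : ((σ p).val + 1, k' + 2 - (σ p).val) ∈ (List.ofFn f).take (q.val - 1) := by
        have hg : ((List.ofFn f).take (q.val - 1))[p.val - 1]'hpl
            = ((σ p).val + 1, k' + 2 - (σ p).val) := by
          rw [List.getElem_take, List.getElem_ofFn]; exact huu
        rw [← hg]
        exact List.getElem_mem hpl
      have hfin := nst_lb2 ((List.ofFn f).take (q.val - 1)) ((List.ofFn f).drop (q.val - 1 + 1))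
        ((σ p).val + 1, k' + 2 - (σ p).val) ((σ q).val + 1, k' + 2 - (σ q).val)
        humem ((t (σ 0)).1.1, 0)
      rw [← hsplit] at hfin
      simp only at hfin
      omega
  rw [hval] at hlb
  omega

end Stmt6


/-- the monoid `U_n(ℕ_max)` of unitriangular tropical matrices with
above-diagonal entries in `ℕ ∪ {-∞}` is strongly permutable iff `n ≤ 2`. -/
theorem stmt_6 (n : ℕ) (hn : 0 < n) :
    StronglyPermutable (UMat NMax n) ↔ n ≤ 2 := by
  constructor
  · intro hSP
    by_contra hc
    exact Stmt6.not_sp_of_ge_three (by omega) hSP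
  · exact fun h => Stmt6.sp_of_le_two h
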